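/- Let n ≥ 3 be an integer and define f : ℂ∖{0} → ℝ³ by f(z) = (Re z, log|z|, Re(z^{n−1})/(n−1) − Im z). Then: (1) f is injective; (2) f is an immersion, i.e. its real derivative is injective at every point of ℂ∖{0}; (3) f is proper, i.e. the preimage of every compact subset of ℝ³ is compact (equivalently ‖f(z)‖ → ∞ both as z → 0 and as |z| → ∞). -/

import Mathlib

open Complex Filter Function

/-- The sphere with one `(1,0,0)` end at `0` and one `(1,2,n)` end at `∞`:
`f(z) = (Re z, log|z|, Re(z^{n-1})/(n-1) - Im z)` is injective, an immersion,
and proper on `ℂ ∖ {0}`. -/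
theorem stmt_2 (n : ℕ) (hn : 3 ≤ n) (f : ℂ → ℝ × ℝ × ℝ)
    (hf : ∀ z, f z =
      (z.re, Real.log (‖z‖), (z ^ (n - 1)).re / ((n : ℝ) - 1) - z.im)) :
    Set.InjOn f {z : ℂ | z ≠ 0} ∧
    (∀ z : ℂ, z ≠ 0 → Function.Injective (fderiv ℝ f z)) ∧
    (∀ K : Set (ℝ × ℝ × ℝ), IsCompact K →
      IsCompact {z : ℂ | z ≠ 0 ∧ f z ∈ K}) := by
  have hn1 : ((n : ℝ) - 1) ≠ 0 := by
    have : (3 : ℝ) ≤ (n : ℝ) := by exact_mod_cast hn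
    linarith
  refine ⟨?_, ?_, ?_⟩
  · -- Injectivity
    intro z hz w hw hzw
    rw [hf, hf] at hzw
    simp only [Prod.mk.injEq] at hzw
    obtain ⟨e1, e2, e3⟩ := hzw
    have hza : 0 < ‖z‖ := norm_pos_iff.mpr hz
    have hwa : 0 < ‖w‖ := norm_pos_iff.mpr hw
    have habs : ‖z‖ = ‖w‖ := by
      have := congrArg Real.exp e2
      rwa [Real.exp_log hza, Real.exp_log hwa] at this
    have hsq : z.im ^ 2 = w.im ^ 2 := by
      have h1 : ‖z‖ ^ 2 = ‖w‖ ^ 2 := by rw [habs]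
      rw [Complex.sq_norm, Complex.sq_norm, Complex.normSq_apply,
        Complex.normSq_apply] at h1
      have h2' : z.re * z.re = w.re * w.re := by rw [e1]
      rw [pow_two, pow_two]
      linarith
    rcases sq_eq_sq_iff_eq_or_eq_neg.mp hsq with him | him
    · exact Complex.ext e1 him
    · -- w = conj z
      have hw' : w = (starRingEnd ℂ) z := by
        apply Complex.ext
        · simpa using e1.symm
        · simp [him]
      have hre : (w ^ (n - 1)).re = (z ^ (n - 1)).re := by
        rw [hw', ← map_pow, Complex.conj_re]
      rw [hre] at e3
      have : z.im = w.im := by linarith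
      exact Complex.ext e1 this
  · -- Immersion
    intro z hz
    have hz' : Complex.normSq z ≠ 0 := by
      simpa [Complex.normSq_eq_zero] using hz
    have hre := Complex.reCLM.hasFDerivAt (x := z)
    have him := Complex.imCLM.hasFDerivAt (x := z)
    -- derivative of normSq
    have hN : HasFDerivAt (fun w : ℂ => Complex.normSq w)
        ((z.re • Complex.reCLM + z.re • Complex.reCLM) +
          (z.im • Complex.imCLM + z.im • Complex.imCLM)) z := by
      have := (hre.mul hre).add (him.mul him)
      exact this
    have h2 : HasFDerivAt (fun w : ℂ => Real.log (‖w‖))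
        ((2 : ℝ)⁻¹ • ((Complex.normSq z)⁻¹ •
          ((z.re • Complex.reCLM + z.re • Complex.reCLM) +
            (z.im • Complex.imCLM + z.im • Complex.imCLM)))) z := by
      have heq : (fun w : ℂ => Real.log (‖w‖)) =
          fun w : ℂ => (2 : ℝ)⁻¹ * Real.log (Complex.normSq w) := by
        funext w
        rw [Complex.norm_def, Real.log_sqrt (Complex.normSq_nonneg w)]
        ring
      rw [heq]
      have hlog : HasFDerivAt (fun w : ℂ => Real.log (Complex.normSq w))
          ((Complex.normSq z)⁻¹ •
            ((z.re • Complex.reCLM + z.re • Complex.reCLM) +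
              (z.im • Complex.imCLM + z.im • Complex.imCLM))) z := by
        have := (Real.hasDerivAt_log hz').comp_hasFDerivAt z hN
        exact this
      simpa using hlog.const_mul ((2 : ℝ)⁻¹)
    -- derivative of third component
    have hp : HasFDerivAt (fun w : ℂ => w ^ (n - 1))
        (((ContinuousLinearMap.smulRight (1 : ℂ →L[ℂ] ℂ)
          (((n - 1 : ℕ) : ℂ) * z ^ (n - 1 - 1)))).restrictScalars ℝ) z :=
      (hasDerivAt_pow (n - 1) z).hasFDerivAt.restrictScalars ℝ
    have h3 : HasFDerivAt
        (fun w : ℂ => (w ^ (n - 1)).re / ((n : ℝ) - 1) - w.im)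
        ((((n : ℝ) - 1)⁻¹ • (Complex.reCLM.comp
          ((ContinuousLinearMap.smulRight (1 : ℂ →L[ℂ] ℂ)
            (((n - 1 : ℕ) : ℂ) * z ^ (n - 1 - 1))).restrictScalars ℝ))) -
          Complex.imCLM) z := by
      have hre3 : HasFDerivAt (fun w : ℂ => (w ^ (n - 1)).re)
          (Complex.reCLM.comp
            ((ContinuousLinearMap.smulRight (1 : ℂ →L[ℂ] ℂ)
              (((n - 1 : ℕ) : ℂ) * z ^ (n - 1 - 1))).restrictScalars ℝ)) z := by
        have := (Complex.reCLM.hasFDerivAt (x := z ^ (n - 1))).comp z hp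
        exact this
      have heq : (fun w : ℂ => (w ^ (n - 1)).re / ((n : ℝ) - 1) - w.im) =
          fun w : ℂ => ((n : ℝ) - 1)⁻¹ * (w ^ (n - 1)).re - w.im := by
        funext w; ring
      rw [heq]
      have := (hre3.const_mul (((n : ℝ) - 1)⁻¹)).sub him
      exact this
    have H := HasFDerivAt.prodMk hre (h2.prodMk h3)
    have hfeq : f = fun w : ℂ =>
        (w.re, Real.log (‖w‖),
          (w ^ (n - 1)).re / ((n : ℝ) - 1) - w.im) := funext hf
    have hfd := H.fderiv
    rw [hfeq]
    rw [show (fun w : ℂ =>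
        (w.re, Real.log (‖w‖),
          (w ^ (n - 1)).re / ((n : ℝ) - 1) - w.im)) = fun w : ℂ =>
        (Complex.reCLM w, Real.log (‖w‖),
          (w ^ (n - 1)).re / ((n : ℝ) - 1) - w.im) from rfl]
    rw [hfd]
    intro a b hab
    rw [← sub_eq_zero]
    set d := a - b with hdd
    have hL : ∀ (L : ℂ →L[ℝ] ℝ × ℝ × ℝ), L a = L b → L d = 0 := by
      intro L h
      rw [hdd, map_sub, h, sub_self]
    have h0 := hL _ hab
    simp only [ContinuousLinearMap.prod_apply, ContinuousLinearMap.smul_apply,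
      ContinuousLinearMap.add_apply, ContinuousLinearMap.coe_smul',
      ContinuousLinearMap.sub_apply, ContinuousLinearMap.comp_apply,
      ContinuousLinearMap.coe_restrictScalars',
      ContinuousLinearMap.smulRight_apply, ContinuousLinearMap.one_apply,
      Complex.reCLM_apply, Complex.imCLM_apply, Pi.smul_apply, smul_eq_mul,
      Prod.mk_eq_zero] at h0
    obtain ⟨A, B, C⟩ := h0
    -- A : d.re = 0
    -- B : 2⁻¹ * ((normSq z)⁻¹ * (...)) = 0
    -- C : (n-1)⁻¹ * (d • (...)).re - d.im = 0
    have hB : z.im * d.im = 0 := by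
      rw [A] at B
      field_simp at B
      linarith
    rcases mul_eq_zero.mp hB with hy | hdi
    · -- z is real
      have hzre : z = ((z.re : ℝ) : ℂ) := Complex.ext rfl (by simp [hy])
      have hcim : ((((n - 1 : ℕ) : ℂ)) * z ^ (n - 1 - 1)).im = 0 := by
        rw [hzre, ← Complex.ofReal_pow, Complex.mul_im, Complex.ofReal_im,
          Complex.natCast_im]
        ring
      have hdim : d.im = 0 := by
        have hre0 : (d * (((n - 1 : ℕ) : ℂ) * z ^ (n - 1 - 1))).re = 0 := by
          rw [Complex.mul_re, A, hcim]
          ring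
        rw [hre0] at C
        simpa using C
      apply Complex.ext A hdim
    · exact Complex.ext A hdi
  · -- Properness
    intro K hK
    obtain ⟨r, hr⟩ := hK.isBounded.subset_closedBall 0
    have hεpos : 0 < Real.exp (-r) := Real.exp_pos _
    set ε := Real.exp (-r)
    set R := Real.exp r
    have hTclosed : IsClosed {z : ℂ | ε ≤ ‖z‖} :=
      isClosed_le continuous_const continuous_norm
    have hfc : ContinuousOn f {z : ℂ | ε ≤ ‖z‖} := by
      rw [funext hf]
      apply ContinuousOn.prodMk
      · exact Complex.continuous_re.continuousOn
      apply ContinuousOn.prodMk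
      · apply Real.continuousOn_log.comp continuous_norm.continuousOn
        intro z hz
        simp only [Set.mem_compl_iff, Set.mem_singleton_iff]
        intro h0
        have hz' : ε ≤ ‖z‖ := hz
        rw [h0] at hz'
        linarith
      · exact (((Complex.continuous_re.comp (continuous_pow (n - 1))).div_const
          _).sub Complex.continuous_im).continuousOn
    have hCclosed : IsClosed ({z : ℂ | ε ≤ ‖z‖} ∩ f ⁻¹' K) :=
      hfc.preimage_isClosed_of_isClosed hTclosed hK.isClosed
    have hSeq : {z : ℂ | z ≠ 0 ∧ f z ∈ K} =
        ({z : ℂ | ε ≤ ‖z‖} ∩ f ⁻¹' K) ∩ Metric.closedBall 0 R := by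
      ext z
      simp only [Set.mem_setOf_eq, Set.mem_inter_iff, Set.mem_preimage,
        Metric.mem_closedBall, dist_zero_right]
      constructor
      · rintro ⟨hz0, hzK⟩
        have hza : 0 < ‖z‖ := norm_pos_iff.mpr hz0
        have hnorm : ‖f z‖ ≤ r := by
          have := hr hzK
          simpa [Metric.mem_closedBall, dist_zero_right] using this
        have hlog : |Real.log (‖z‖)| ≤ r := by
          calc |Real.log (‖z‖)| = ‖(f z).2.1‖ := by rw [hf]; rfl
            _ ≤ ‖(f z).2‖ := norm_fst_le _
            _ ≤ ‖f z‖ := norm_snd_le _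
            _ ≤ r := hnorm
        obtain ⟨hl1, hl2⟩ := abs_le.mp hlog
        refine ⟨⟨?_, hzK⟩, ?_⟩
        · calc ε = Real.exp (-r) := rfl
            _ ≤ Real.exp (Real.log (‖z‖)) := Real.exp_le_exp.2 hl1
            _ = ‖z‖ := Real.exp_log hza
        · calc ‖z‖ = Real.exp (Real.log (‖z‖)) :=
              (Real.exp_log hza).symm
            _ ≤ Real.exp r := Real.exp_le_exp.2 hl2
      · rintro ⟨⟨hεz, hzK⟩, _⟩
        refine ⟨?_, hzK⟩
        intro h0
        rw [h0] at hεz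
        simp at hεz
        linarith
    rw [hSeq]
    exact (isCompact_closedBall 0 R).inter_left hCclosed
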